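/- Rate converse for causal coding with decoder side information (informational core of Theorem 5): Let (x_t)_{t=1}^T and (w_t)_{t=1}^T be random variables taking values in finite sets, and for each t let a_t take values in a finite set A_t and be measurable with respect to the σ-algebra generated by (x_1,...,x_t) (a deterministic causal encoding of x^t). Assume that for every t the pair (x^t, a^{t-1}) is conditionally independent of w_t given (a^t, w^{t-1}). Then Σ_{t=1}^T log₂(card A_t) ≥ Σ_{t=1}^T I[x^t; w_t | w^{t-1}], i.e., the total rate is at least the directed information I(x^T → w^T). -/

import Mathlib

open MeasureTheory ProbabilityTheory Finset

/-- Shannon entropy (base 2) of a random variable with values in a finite type. -/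
noncomputable def shEnt {Ω : Type*} [MeasurableSpace Ω] {S : Type*} [Fintype S]
    (μ : Measure Ω) (X : Ω → S) : ℝ :=
  -∑ s : S, ((μ (X ⁻¹' {s})).toReal * Real.logb 2 (μ (X ⁻¹' {s})).toReal)

/-- Mutual information (base 2). -/
noncomputable def mutInf {Ω : Type*} [MeasurableSpace Ω] {S T : Type*} [Fintype S] [Fintype T]
    (μ : Measure Ω) (X : Ω → S) (Y : Ω → T) : ℝ :=
  shEnt μ X + shEnt μ Y - shEnt μ (fun ω => (X ω, Y ω))

/-- Conditional mutual information (base 2), `I[X ; Y | Z]`. -/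
noncomputable def condMutInf {Ω : Type*} [MeasurableSpace Ω] {S T U : Type*}
    [Fintype S] [Fintype T] [Fintype U]
    (μ : Measure Ω) (X : Ω → S) (Y : Ω → T) (Z : Ω → U) : ℝ :=
  shEnt μ (fun ω => (X ω, Z ω)) + shEnt μ (fun ω => (Y ω, Z ω))
    - shEnt μ (fun ω => (X ω, Y ω, Z ω)) - shEnt μ Z

/-- The history `a^t = (a_1, …, a_t)` of a process (0-indexed: the first `t` variables). -/
def hist {Ω : Type*} {α : ℕ → Type*} (x : (i : ℕ) → Ω → α i) (t : ℕ) :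
    Ω → ((i : Fin t) → α i) :=
  fun ω i => x i ω

theorem hist_measurable {Ω : Type*} [MeasurableSpace Ω] {α : ℕ → Type*}
    [∀ i, MeasurableSpace (α i)]
    (x : (i : ℕ) → Ω → α i) (hx : ∀ i, Measurable (x i)) (t : ℕ) :
    Measurable (hist x t) :=
  measurable_pi_lambda _ fun j => hx j

set_option linter.unusedSectionVars false
set_option linter.unusedVariables false

section Aux

variable {Ω : Type*} [MeasurableSpace Ω] {μ : Measure Ω} [IsProbabilityMeasure μ]

lemma RC.pre2 {S U : Type*} (X : Ω → S) (Z : Ω → U) (s : S) (u : U) :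
    (fun ω => (X ω, Z ω)) ⁻¹' {(s, u)} = X ⁻¹' {s} ∩ Z ⁻¹' {u} := by
  ext ω; simp [Prod.ext_iff]

lemma RC.pre3 {S T U : Type*} (X : Ω → S) (Y : Ω → T) (Z : Ω → U) (s : S) (t : T) (u : U) :
    (fun ω => (X ω, Y ω, Z ω)) ⁻¹' {(s, t, u)} = X ⁻¹' {s} ∩ (Y ⁻¹' {t} ∩ Z ⁻¹' {u}) := by
  ext ω; simp [Prod.ext_iff, and_assoc]

lemma RC.sum_meas_inter {T : Type*} [Fintype T] [MeasurableSpace T] [MeasurableSingletonClass T]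
    {B : Set Ω} (hB : MeasurableSet B) {Y : Ω → T} (hY : Measurable Y) :
    ∑ t : T, (μ (B ∩ Y ⁻¹' {t})).toReal = (μ B).toReal := by
  rw [← ENNReal.toReal_sum (fun a _ => measure_ne_top μ _)]
  congr 1
  have h1 : ∀ t : T, MeasurableSet (B ∩ Y ⁻¹' {t}) :=
    fun t => hB.inter (hY (measurableSet_singleton t))
  have hd : Set.PairwiseDisjoint (↑(Finset.univ : Finset T)) (fun t => B ∩ Y ⁻¹' {t}) := by
    intro t _ t' _ htt'
    refine Set.disjoint_left.mpr ?_
    rintro ω ⟨-, hω1⟩ ⟨-, hω2⟩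
    simp only [Set.mem_preimage, Set.mem_singleton_iff] at hω1 hω2
    exact htt' (hω1 ▸ hω2 ▸ rfl)
  have h2 : B = ⋃ t ∈ (Finset.univ : Finset T), B ∩ Y ⁻¹' {t} := by
    ext ω; simp
  conv_rhs => rw [h2]
  rw [measure_biUnion_finset hd (fun t _ => h1 t)]

lemma RC.sum_pr {S : Type*} [Fintype S] [MeasurableSpace S] [MeasurableSingletonClass S]
    {X : Ω → S} (hX : Measurable X) : ∑ s : S, (μ (X ⁻¹' {s})).toReal = 1 := by
  have h := RC.sum_meas_inter (μ := μ) MeasurableSet.univ hX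
  simpa using h

lemma RC.pr_le_pr {B C : Set Ω} (h : B ⊆ C) : (μ B).toReal ≤ (μ C).toReal :=
  (ENNReal.toReal_le_toReal (measure_ne_top μ B) (measure_ne_top μ C)).mpr (measure_mono h)

lemma RC.shEnt_congr {S : Type*} [Fintype S] {X Y : Ω → S} (h : ∀ ω, X ω = Y ω) :
    shEnt μ X = shEnt μ Y := by
  have hXY : X = Y := funext h
  rw [hXY]

lemma RC.shEnt_comp {S T : Type*} [Fintype S] [Fintype T] (f : S → T)
    (hf : Function.Injective f) (X : Ω → S) :
    shEnt μ (fun ω => f (X ω)) = shEnt μ X := by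
  classical
  simp only [shEnt]
  congr 1
  have h1 : ∑ t : T, (μ ((fun ω => f (X ω)) ⁻¹' {t})).toReal
        * Real.logb 2 (μ ((fun ω => f (X ω)) ⁻¹' {t})).toReal
      = ∑ t ∈ Finset.univ.image f, (μ ((fun ω => f (X ω)) ⁻¹' {t})).toReal
        * Real.logb 2 (μ ((fun ω => f (X ω)) ⁻¹' {t})).toReal := by
    refine (Finset.sum_subset (Finset.subset_univ _) ?_).symm
    intro t _ ht
    have hempty : (fun ω => f (X ω)) ⁻¹' {t} = ∅ := by
      ext ω
      simp only [Set.mem_preimage, Set.mem_singleton_iff, Set.mem_empty_iff_false, iff_false]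
      intro hc
      exact ht (Finset.mem_image.mpr ⟨X ω, Finset.mem_univ _, hc⟩)
    simp [hempty]
  rw [h1, Finset.sum_image (fun a _ b _ h => hf h)]
  refine Finset.sum_congr rfl fun s _ => ?_
  have hpre : (fun ω => f (X ω)) ⁻¹' {f s} = X ⁻¹' {s} := by
    ext ω; simp [hf.eq_iff]
  rw [hpre]

lemma RC.shEnt_relabel {S T : Type*} [Fintype S] [Fintype T] {X : Ω → S} {Y : Ω → T}
    (f : S → T) (hf : Function.Injective f) (h : ∀ ω, Y ω = f (X ω)) :
    shEnt μ Y = shEnt μ X :=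
  (RC.shEnt_congr h).trans (RC.shEnt_comp f hf X)

lemma RC.gibbs {ι : Type*} [Fintype ι] {p q : ι → ℝ} (hp : ∀ i, 0 ≤ p i) (hq : ∀ i, 0 ≤ q i)
    (hpq : ∀ i, p i ≠ 0 → q i ≠ 0) (hs : ∑ i, q i ≤ ∑ i, p i) :
    ∑ i, p i * Real.logb 2 (q i) ≤ ∑ i, p i * Real.logb 2 (p i) := by
  have hlog2 : (0:ℝ) < Real.log 2 := Real.log_pos (by norm_num)
  have key : ∀ i, p i * Real.logb 2 (q i) - p i * Real.logb 2 (p i)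
      ≤ (q i - p i) / Real.log 2 := by
    intro i
    rcases (hp i).eq_or_lt with h0 | h0
    · rw [← h0]
      simp only [zero_mul, sub_zero, zero_sub, neg_zero, sub_self]
      exact div_nonneg (hq i) hlog2.le
    · have hqi : 0 < q i := lt_of_le_of_ne (hq i) (Ne.symm (hpq i (ne_of_gt h0)))
      have hlogb : Real.logb 2 (q i) - Real.logb 2 (p i) = Real.log (q i / p i) / Real.log 2 := by
        rw [Real.log_div (ne_of_gt hqi) (ne_of_gt h0)]
        simp only [Real.logb]
        ring
      have hle : Real.log (q i / p i) ≤ q i / p i - 1 :=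
        Real.log_le_sub_one_of_pos (div_pos hqi h0)
      have heq : p i * Real.logb 2 (q i) - p i * Real.logb 2 (p i)
          = p i * (Real.log (q i / p i) / Real.log 2) := by rw [← hlogb]; ring
      rw [heq]
      have h2 : p i * (Real.log (q i / p i) / Real.log 2)
          ≤ p i * ((q i / p i - 1) / Real.log 2) := by
        apply mul_le_mul_of_nonneg_left _ h0.le
        exact (div_le_div_iff_of_pos_right hlog2).mpr hle
      have h3 : p i * ((q i / p i - 1) / Real.log 2) = (q i - p i) / Real.log 2 := by
        field_simp
      linarith
  have hsum := Finset.sum_le_sum (fun i (_ : i ∈ Finset.univ) => key i)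
  rw [Finset.sum_sub_distrib] at hsum
  have hdiv : ∑ i, (q i - p i) / Real.log 2 = (∑ i, q i - ∑ i, p i) / Real.log 2 := by
    rw [← Finset.sum_div, Finset.sum_sub_distrib]
  rw [hdiv] at hsum
  have hle0 : (∑ i, q i - ∑ i, p i) / Real.log 2 ≤ 0 :=
    div_nonpos_of_nonpos_of_nonneg (sub_nonpos.mpr hs) hlog2.le
  linarith

end Aux
section Aux2

variable {Ω : Type*} [MeasurableSpace Ω] {μ : Measure Ω} [IsProbabilityMeasure μ]

lemma RC.shEnt_pair {S U : Type*} [Fintype S] [Fintype U] (X : Ω → S) (Z : Ω → U) :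
    shEnt μ (fun ω => (X ω, Z ω)) = -∑ s : S, ∑ u : U,
      (μ (X ⁻¹' {s} ∩ Z ⁻¹' {u})).toReal
        * Real.logb 2 (μ (X ⁻¹' {s} ∩ Z ⁻¹' {u})).toReal := by
  simp only [shEnt]
  congr 1
  rw [Fintype.sum_prod_type]
  refine Finset.sum_congr rfl fun s _ => Finset.sum_congr rfl fun u _ => ?_
  rw [RC.pre2]

lemma RC.shEnt_triple {S T U : Type*} [Fintype S] [Fintype T] [Fintype U]
    (X : Ω → S) (Y : Ω → T) (Z : Ω → U) :
    shEnt μ (fun ω => (X ω, Y ω, Z ω)) = -∑ s : S, ∑ t : T, ∑ u : U,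
      (μ (X ⁻¹' {s} ∩ (Y ⁻¹' {t} ∩ Z ⁻¹' {u}))).toReal
        * Real.logb 2 (μ (X ⁻¹' {s} ∩ (Y ⁻¹' {t} ∩ Z ⁻¹' {u}))).toReal := by
  simp only [shEnt]
  congr 1
  rw [Fintype.sum_prod_type]
  refine Finset.sum_congr rfl fun s _ => ?_
  rw [Fintype.sum_prod_type]
  refine Finset.sum_congr rfl fun t _ => Finset.sum_congr rfl fun u _ => ?_
  rw [RC.pre3]

variable {S T U : Type*} [Fintype S] [Fintype T] [Fintype U]
  [MeasurableSpace S] [MeasurableSpace T] [MeasurableSpace U]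
  [MeasurableSingletonClass S] [MeasurableSingletonClass T] [MeasurableSingletonClass U]
  {X : Ω → S} {Y : Ω → T} {Z : Ω → U}

lemma RC.margY (hX : Measurable X) (hY : Measurable Y) (hZ : Measurable Z) (s : S) (u : U) :
    ∑ t : T, (μ (X ⁻¹' {s} ∩ (Y ⁻¹' {t} ∩ Z ⁻¹' {u}))).toReal
      = (μ (X ⁻¹' {s} ∩ Z ⁻¹' {u})).toReal := by
  have hre : ∀ t : T, X ⁻¹' {s} ∩ (Y ⁻¹' {t} ∩ Z ⁻¹' {u})
      = (X ⁻¹' {s} ∩ Z ⁻¹' {u}) ∩ Y ⁻¹' {t} := by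
    intro t; ext ω; simp only [Set.mem_inter_iff, Set.mem_preimage]; tauto
  simp_rw [hre]
  exact RC.sum_meas_inter ((hX (measurableSet_singleton s)).inter
    (hZ (measurableSet_singleton u))) hY

lemma RC.margX (hX : Measurable X) (hY : Measurable Y) (hZ : Measurable Z) (t : T) (u : U) :
    ∑ s : S, (μ (X ⁻¹' {s} ∩ (Y ⁻¹' {t} ∩ Z ⁻¹' {u}))).toReal
      = (μ (Y ⁻¹' {t} ∩ Z ⁻¹' {u})).toReal := by
  have hre : ∀ s : S, X ⁻¹' {s} ∩ (Y ⁻¹' {t} ∩ Z ⁻¹' {u})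
      = (Y ⁻¹' {t} ∩ Z ⁻¹' {u}) ∩ X ⁻¹' {s} := by
    intro s; ext ω; simp only [Set.mem_inter_iff, Set.mem_preimage]; tauto
  simp_rw [hre]
  exact RC.sum_meas_inter ((hY (measurableSet_singleton t)).inter
    (hZ (measurableSet_singleton u))) hX

lemma RC.margXZ (hX : Measurable X) (hZ : Measurable Z) (u : U) :
    ∑ s : S, (μ (X ⁻¹' {s} ∩ Z ⁻¹' {u})).toReal = (μ (Z ⁻¹' {u})).toReal := by
  have hre : ∀ s : S, X ⁻¹' {s} ∩ Z ⁻¹' {u} = Z ⁻¹' {u} ∩ X ⁻¹' {s} := by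
    intro s; exact Set.inter_comm _ _
  simp_rw [hre]
  exact RC.sum_meas_inter (hZ (measurableSet_singleton u)) hX

lemma RC.groupA (hX : Measurable X) (hY : Measurable Y) (hZ : Measurable Z) (c : S → U → ℝ) :
    ∑ s : S, ∑ t : T, ∑ u : U,
        (μ (X ⁻¹' {s} ∩ (Y ⁻¹' {t} ∩ Z ⁻¹' {u}))).toReal * c s u
      = ∑ s : S, ∑ u : U, (μ (X ⁻¹' {s} ∩ Z ⁻¹' {u})).toReal * c s u := by
  refine Finset.sum_congr rfl fun s _ => ?_
  rw [Finset.sum_comm]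
  refine Finset.sum_congr rfl fun u _ => ?_
  rw [← Finset.sum_mul, RC.margY hX hY hZ s u]

lemma RC.groupB (hX : Measurable X) (hY : Measurable Y) (hZ : Measurable Z) (c : T → U → ℝ) :
    ∑ s : S, ∑ t : T, ∑ u : U,
        (μ (X ⁻¹' {s} ∩ (Y ⁻¹' {t} ∩ Z ⁻¹' {u}))).toReal * c t u
      = ∑ t : T, ∑ u : U, (μ (Y ⁻¹' {t} ∩ Z ⁻¹' {u})).toReal * c t u := by
  rw [Finset.sum_comm]
  refine Finset.sum_congr rfl fun t _ => ?_
  rw [Finset.sum_comm]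
  refine Finset.sum_congr rfl fun u _ => ?_
  rw [← Finset.sum_mul, RC.margX hX hY hZ t u]

lemma RC.groupC (hX : Measurable X) (hY : Measurable Y) (hZ : Measurable Z) (c : U → ℝ) :
    ∑ s : S, ∑ t : T, ∑ u : U,
        (μ (X ⁻¹' {s} ∩ (Y ⁻¹' {t} ∩ Z ⁻¹' {u}))).toReal * c u
      = ∑ u : U, (μ (Z ⁻¹' {u})).toReal * c u := by
  have h1 : ∀ s : S, ∑ t : T, ∑ u : U,
      (μ (X ⁻¹' {s} ∩ (Y ⁻¹' {t} ∩ Z ⁻¹' {u}))).toReal * c u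
      = ∑ u : U, (μ (X ⁻¹' {s} ∩ Z ⁻¹' {u})).toReal * c u := by
    intro s
    rw [Finset.sum_comm]
    refine Finset.sum_congr rfl fun u _ => ?_
    rw [← Finset.sum_mul, RC.margY hX hY hZ s u]
  rw [Finset.sum_congr rfl fun s _ => h1 s, Finset.sum_comm]
  refine Finset.sum_congr rfl fun u _ => ?_
  rw [← Finset.sum_mul, RC.margXZ hX hZ u]

end Aux2
section Aux3

variable {Ω : Type*} [MeasurableSpace Ω] {μ : Measure Ω} [IsProbabilityMeasure μ]
variable {S T U : Type*} [Fintype S] [Fintype T] [Fintype U]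
  [MeasurableSpace S] [MeasurableSpace T] [MeasurableSpace U]
  [MeasurableSingletonClass S] [MeasurableSingletonClass T] [MeasurableSingletonClass U]
  {X : Ω → S} {Y : Ω → T} {Z : Ω → U}

lemma RC.sum_p3_eq_one (hX : Measurable X) (hY : Measurable Y) (hZ : Measurable Z) :
    ∑ s : S, ∑ t : T, ∑ u : U,
      (μ (X ⁻¹' {s} ∩ (Y ⁻¹' {t} ∩ Z ⁻¹' {u}))).toReal = 1 := by
  have h1 := RC.groupC (μ := μ) hX hY hZ (fun _ => (1:ℝ))
  simp only [mul_one] at h1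
  rw [h1, RC.sum_pr hZ]

lemma RC.shEnt_submod (hX : Measurable X) (hY : Measurable Y) (hZ : Measurable Z) :
    shEnt μ (fun ω => (X ω, Y ω, Z ω)) + shEnt μ Z
      ≤ shEnt μ (fun ω => (X ω, Z ω)) + shEnt μ (fun ω => (Y ω, Z ω)) := by
  classical
  rw [RC.shEnt_triple X Y Z, RC.shEnt_pair X Z, RC.shEnt_pair Y Z]
  simp only [shEnt]
  -- abbreviations
  set p3 : S → T → U → ℝ :=
    fun s t u => (μ (X ⁻¹' {s} ∩ (Y ⁻¹' {t} ∩ Z ⁻¹' {u}))).toReal with hp3def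
  set pXZ : S → U → ℝ := fun s u => (μ (X ⁻¹' {s} ∩ Z ⁻¹' {u})).toReal with hpXZdef
  set pYZ : T → U → ℝ := fun t u => (μ (Y ⁻¹' {t} ∩ Z ⁻¹' {u})).toReal with hpYZdef
  set pZ : U → ℝ := fun u => (μ (Z ⁻¹' {u})).toReal with hpZdef
  have hle1 : ∀ s t u, p3 s t u ≤ pXZ s u := fun s t u =>
    RC.pr_le_pr (fun ω hω => ⟨hω.1, hω.2.2⟩)
  have hle2 : ∀ s t u, p3 s t u ≤ pYZ t u := fun s t u =>
    RC.pr_le_pr (fun ω hω => hω.2)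
  have hle3 : ∀ s t u, p3 s t u ≤ pZ u := fun s t u =>
    RC.pr_le_pr (fun ω hω => hω.2.2)
  -- Gibbs inequality with q = pXZ * pYZ / pZ
  have hg := RC.gibbs (ι := S × T × U)
    (p := fun r => p3 r.1 r.2.1 r.2.2)
    (q := fun r => pXZ r.1 r.2.2 * pYZ r.2.1 r.2.2 / pZ r.2.2)
    (fun r => ENNReal.toReal_nonneg)
    (fun r => by positivity)
    (fun r hr => by
      have h0 : 0 < p3 r.1 r.2.1 r.2.2 := lt_of_le_of_ne ENNReal.toReal_nonneg (Ne.symm hr)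
      have h1 : 0 < pXZ r.1 r.2.2 := lt_of_lt_of_le h0 (hle1 _ _ _)
      have h2 : 0 < pYZ r.2.1 r.2.2 := lt_of_lt_of_le h0 (hle2 _ _ _)
      have h3 : 0 < pZ r.2.2 := lt_of_lt_of_le h0 (hle3 _ _ _)
      positivity)
    (by
      simp only [Fintype.sum_prod_type]
      have hRHS : ∑ s : S, ∑ t : T, ∑ u : U, p3 s t u = 1 := RC.sum_p3_eq_one hX hY hZ
      rw [hRHS]
      have hstep : ∀ u : U, ∑ s : S, ∑ t : T, pXZ s u * pYZ t u / pZ u ≤ pZ u := by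
        intro u
        have hYZsum : ∑ t : T, pYZ t u = pZ u := RC.margXZ hY hZ u
        have hXZsum : ∑ s : S, pXZ s u = pZ u := RC.margXZ hX hZ u
        have hcalc : ∑ s : S, ∑ t : T, pXZ s u * pYZ t u / pZ u
            = pZ u * pZ u / pZ u := by
          have hper : ∀ s : S, ∑ t : T, pXZ s u * pYZ t u / pZ u
              = pXZ s u * pZ u / pZ u := by
            intro s
            rw [← Finset.sum_div, ← Finset.mul_sum, hYZsum]
          rw [Finset.sum_congr rfl fun s _ => hper s, ← Finset.sum_div,
            ← Finset.sum_mul, hXZsum]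
        rw [hcalc]
        rcases eq_or_ne (pZ u) 0 with h0 | h0
        · rw [h0]; simp
        · rw [mul_div_assoc, div_self h0, mul_one]
      calc ∑ s : S, ∑ t : T, ∑ u : U, pXZ s u * pYZ t u / pZ u
            = ∑ s : S, ∑ u : U, ∑ t : T, pXZ s u * pYZ t u / pZ u :=
              Finset.sum_congr rfl fun s _ => Finset.sum_comm
        _ = ∑ u : U, ∑ s : S, ∑ t : T, pXZ s u * pYZ t u / pZ u := Finset.sum_comm
        _ ≤ ∑ u : U, pZ u := Finset.sum_le_sum fun u _ => hstep u
        _ = 1 := RC.sum_pr hZ)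
  simp only [Fintype.sum_prod_type] at hg
  -- expand logb of the product/quotient
  have hexp : ∑ s : S, ∑ t : T, ∑ u : U,
      p3 s t u * Real.logb 2 (pXZ s u * pYZ t u / pZ u)
      = (∑ s : S, ∑ t : T, ∑ u : U, p3 s t u * Real.logb 2 (pXZ s u))
        + (∑ s : S, ∑ t : T, ∑ u : U, p3 s t u * Real.logb 2 (pYZ t u))
        - (∑ s : S, ∑ t : T, ∑ u : U, p3 s t u * Real.logb 2 (pZ u)) := by
    rw [← Finset.sum_add_distrib, ← Finset.sum_sub_distrib]
    refine Finset.sum_congr rfl fun s _ => ?_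
    rw [← Finset.sum_add_distrib, ← Finset.sum_sub_distrib]
    refine Finset.sum_congr rfl fun t _ => ?_
    rw [← Finset.sum_add_distrib, ← Finset.sum_sub_distrib]
    refine Finset.sum_congr rfl fun u _ => ?_
    rcases eq_or_ne (p3 s t u) 0 with h0 | h0
    · rw [h0]; ring
    · have hpos : 0 < p3 s t u := lt_of_le_of_ne ENNReal.toReal_nonneg (Ne.symm h0)
      have h1 : pXZ s u ≠ 0 := (lt_of_lt_of_le hpos (hle1 s t u)).ne'
      have h2 : pYZ t u ≠ 0 := (lt_of_lt_of_le hpos (hle2 s t u)).ne'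
      have h3 : pZ u ≠ 0 := (lt_of_lt_of_le hpos (hle3 s t u)).ne'
      rw [Real.logb_div (mul_ne_zero h1 h2) h3, Real.logb_mul h1 h2]
      ring
  rw [hexp] at hg
  rw [RC.groupA hX hY hZ (fun s u => Real.logb 2 (pXZ s u)),
      RC.groupB hX hY hZ (fun t u => Real.logb 2 (pYZ t u)),
      RC.groupC hX hY hZ (fun u => Real.logb 2 (pZ u))] at hg
  linarith

end Aux3
section Aux4

variable {Ω : Type*} [MeasurableSpace Ω] {μ : Measure Ω} [IsProbabilityMeasure μ]

lemma RC.shEnt_le_logb_card {S : Type*} [Fintype S] [MeasurableSpace S]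
    [MeasurableSingletonClass S] {X : Ω → S} (hX : Measurable X) :
    shEnt μ X ≤ Real.logb 2 (Fintype.card S) := by
  rcases isEmpty_or_nonempty S with hE | hNE
  · exfalso
    have h1 := RC.sum_pr (μ := μ) hX
    rw [Finset.univ_eq_empty, Finset.sum_empty] at h1
    exact zero_ne_one h1
  · have hcard : (0:ℝ) < Fintype.card S := by exact_mod_cast Fintype.card_pos
    have hg := RC.gibbs (ι := S) (p := fun s => (μ (X ⁻¹' {s})).toReal)
      (q := fun _ => (Fintype.card S : ℝ)⁻¹)
      (fun s => ENNReal.toReal_nonneg)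
      (fun s => by positivity)
      (fun s _ => by positivity)
      (by
        rw [Finset.sum_const, RC.sum_pr hX, Finset.card_univ, nsmul_eq_mul,
          mul_inv_cancel₀ hcard.ne'])
    simp only [shEnt]
    have hconst : ∑ s : S, (μ (X ⁻¹' {s})).toReal * Real.logb 2 (Fintype.card S : ℝ)⁻¹
        = -Real.logb 2 (Fintype.card S) := by
      rw [Real.logb_inv]
      rw [← Finset.sum_mul, RC.sum_pr hX, one_mul]
    rw [hconst] at hg
    linarith

lemma RC.shEnt_left_le_pair {S T : Type*} [Fintype S] [Fintype T]
    [MeasurableSpace S] [MeasurableSpace T]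
    [MeasurableSingletonClass S] [MeasurableSingletonClass T]
    {X : Ω → S} {Y : Ω → T} (hX : Measurable X) (hY : Measurable Y) :
    shEnt μ X ≤ shEnt μ (fun ω => (X ω, Y ω)) := by
  rw [RC.shEnt_pair X Y]
  simp only [shEnt]
  rw [neg_le_neg_iff]
  refine Finset.sum_le_sum fun s _ => ?_
  have hmarg : ∑ t : T, (μ (X ⁻¹' {s} ∩ Y ⁻¹' {t})).toReal = (μ (X ⁻¹' {s})).toReal :=
    RC.sum_meas_inter (hX (measurableSet_singleton s)) hY
  calc ∑ t : T, (μ (X ⁻¹' {s} ∩ Y ⁻¹' {t})).toReal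
          * Real.logb 2 (μ (X ⁻¹' {s} ∩ Y ⁻¹' {t})).toReal
      ≤ ∑ t : T, (μ (X ⁻¹' {s} ∩ Y ⁻¹' {t})).toReal
          * Real.logb 2 (μ (X ⁻¹' {s})).toReal := by
        refine Finset.sum_le_sum fun t _ => ?_
        rcases eq_or_ne ((μ (X ⁻¹' {s} ∩ Y ⁻¹' {t})).toReal) 0 with h0 | h0
        · rw [h0]; simp
        · have hpos : 0 < (μ (X ⁻¹' {s} ∩ Y ⁻¹' {t})).toReal :=
            lt_of_le_of_ne ENNReal.toReal_nonneg (Ne.symm h0)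
          have hle : (μ (X ⁻¹' {s} ∩ Y ⁻¹' {t})).toReal ≤ (μ (X ⁻¹' {s})).toReal :=
            RC.pr_le_pr Set.inter_subset_left
          exact mul_le_mul_of_nonneg_left
            (Real.logb_le_logb_of_le (by norm_num) hpos hle) hpos.le
    _ = (μ (X ⁻¹' {s})).toReal * Real.logb 2 (μ (X ⁻¹' {s})).toReal := by
        rw [← Finset.sum_mul, hmarg]

lemma RC.shEnt_right_le_pair {S T : Type*} [Fintype S] [Fintype T]
    [MeasurableSpace S] [MeasurableSpace T]
    [MeasurableSingletonClass S] [MeasurableSingletonClass T]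
    {X : Ω → S} {Y : Ω → T} (hX : Measurable X) (hY : Measurable Y) :
    shEnt μ Y ≤ shEnt μ (fun ω => (X ω, Y ω)) := by
  have h1 := RC.shEnt_left_le_pair (μ := μ) hY hX
  have h2 : shEnt μ (fun ω => (Y ω, X ω)) = shEnt μ (fun ω => (X ω, Y ω)) :=
    RC.shEnt_relabel Prod.swap Prod.swap_injective (fun ω => rfl)
  linarith

lemma RC.shEnt_of_unique {S : Type*} [Fintype S] [Unique S] (X : Ω → S) :
    shEnt μ X = 0 := by
  simp only [shEnt]
  have huniv : (X ⁻¹' {default}) = Set.univ := by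
    ext ω; simp [Subsingleton.elim (X ω) default]
  rw [Fintype.sum_unique (fun s : S => (μ (X ⁻¹' {s})).toReal
      * Real.logb 2 (μ (X ⁻¹' {s})).toReal), huniv, measure_univ]
  simp

end Aux4
section Aux5

variable {Ω : Type*} [MeasurableSpace Ω] {μ : Measure Ω} [IsProbabilityMeasure μ]

lemma RC.cmi_relabel_left {S S' T U : Type*} [Fintype S] [Fintype S'] [Fintype T] [Fintype U]
    {X : Ω → S} {X' : Ω → S'} {W : Ω → T} {V : Ω → U}
    (f : S → S') (hf : Function.Injective f) (h : ∀ ω, X' ω = f (X ω)) :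
    condMutInf μ X' W V = condMutInf μ X W V := by
  simp only [condMutInf]
  have e1 : shEnt μ (fun ω => (X' ω, V ω)) = shEnt μ (fun ω => (X ω, V ω)) :=
    RC.shEnt_relabel (fun r => (f r.1, r.2))
      (fun a b hab => by
        obtain ⟨a1, a2⟩ := a; obtain ⟨b1, b2⟩ := b
        simp only [Prod.mk.injEq] at hab ⊢
        exact ⟨hf hab.1, hab.2⟩)
      (fun ω => by rw [h ω])
  have e2 : shEnt μ (fun ω => (X' ω, W ω, V ω)) = shEnt μ (fun ω => (X ω, W ω, V ω)) :=
    RC.shEnt_relabel (fun r => (f r.1, r.2))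
      (fun a b hab => by
        obtain ⟨a1, a2⟩ := a; obtain ⟨b1, b2⟩ := b
        simp only [Prod.mk.injEq] at hab ⊢
        exact ⟨hf hab.1, hab.2⟩)
      (fun ω => by rw [h ω])
  rw [e1, e2]

lemma RC.cmi_mono_left {S1 S2 T U : Type*} [Fintype S1] [Fintype S2] [Fintype T] [Fintype U]
    [MeasurableSpace S1] [MeasurableSpace S2] [MeasurableSpace T] [MeasurableSpace U]
    [MeasurableSingletonClass S1] [MeasurableSingletonClass S2]
    [MeasurableSingletonClass T] [MeasurableSingletonClass U]
    {X : Ω → S1} {Y : Ω → S2} {W : Ω → T} {V : Ω → U}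
    (hX : Measurable X) (hY : Measurable Y) (hW : Measurable W) (hV : Measurable V) :
    condMutInf μ X W V ≤ condMutInf μ (fun ω => (X ω, Y ω)) W V := by
  have hsub : shEnt μ (fun ω => (Y ω, W ω, (X ω, V ω))) + shEnt μ (fun ω => (X ω, V ω))
      ≤ shEnt μ (fun ω => (Y ω, (X ω, V ω))) + shEnt μ (fun ω => (W ω, (X ω, V ω))) :=
    RC.shEnt_submod hY hW (hX.prodMk hV)
  have e1 : shEnt μ (fun ω => (Y ω, W ω, (X ω, V ω)))
      = shEnt μ (fun ω => ((X ω, Y ω), W ω, V ω)) :=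
    RC.shEnt_relabel (fun r => (r.1.2, (r.2.1, (r.1.1, r.2.2))))
      (fun a b hab => by
        obtain ⟨⟨a1, a2⟩, a3, a4⟩ := a; obtain ⟨⟨b1, b2⟩, b3, b4⟩ := b
        simp only [Prod.mk.injEq] at hab ⊢
        tauto)
      (fun ω => rfl)
  have e2 : shEnt μ (fun ω => (Y ω, (X ω, V ω)))
      = shEnt μ (fun ω => ((X ω, Y ω), V ω)) :=
    RC.shEnt_relabel (fun r => (r.1.2, (r.1.1, r.2)))
      (fun a b hab => by
        obtain ⟨⟨a1, a2⟩, a3⟩ := a; obtain ⟨⟨b1, b2⟩, b3⟩ := b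
        simp only [Prod.mk.injEq] at hab ⊢
        tauto)
      (fun ω => rfl)
  have e3 : shEnt μ (fun ω => (W ω, (X ω, V ω)))
      = shEnt μ (fun ω => (X ω, W ω, V ω)) :=
    RC.shEnt_relabel (fun r => (r.2.1, (r.1, r.2.2)))
      (fun a b hab => by
        obtain ⟨a1, a2, a3⟩ := a; obtain ⟨b1, b2, b3⟩ := b
        simp only [Prod.mk.injEq] at hab ⊢
        tauto)
      (fun ω => rfl)
  simp only [condMutInf]
  rw [e1, e2, e3] at hsub
  linarith

lemma RC.cmi_chain {S1 S2 T U : Type*} [Fintype S1] [Fintype S2] [Fintype T] [Fintype U]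
    {X : Ω → S1} {Y : Ω → S2} {W : Ω → T} {V : Ω → U} :
    condMutInf μ (fun ω => (X ω, Y ω)) W V
      = condMutInf μ Y W V + condMutInf μ X W (fun ω => (Y ω, V ω)) := by
  simp only [condMutInf]
  have r1 : shEnt μ (fun ω => (X ω, (Y ω, V ω)))
      = shEnt μ (fun ω => ((X ω, Y ω), V ω)) :=
    RC.shEnt_relabel (fun r => (r.1.1, (r.1.2, r.2)))
      (fun a b hab => by
        obtain ⟨⟨a1, a2⟩, a3⟩ := a; obtain ⟨⟨b1, b2⟩, b3⟩ := b
        simp only [Prod.mk.injEq] at hab ⊢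
        tauto)
      (fun ω => rfl)
  have r2 : shEnt μ (fun ω => (W ω, (Y ω, V ω)))
      = shEnt μ (fun ω => (Y ω, W ω, V ω)) :=
    RC.shEnt_relabel (fun r => (r.2.1, (r.1, r.2.2)))
      (fun a b hab => by
        obtain ⟨a1, a2, a3⟩ := a; obtain ⟨b1, b2, b3⟩ := b
        simp only [Prod.mk.injEq] at hab ⊢
        tauto)
      (fun ω => rfl)
  have r3 : shEnt μ (fun ω => (X ω, W ω, (Y ω, V ω)))
      = shEnt μ (fun ω => ((X ω, Y ω), W ω, V ω)) :=
    RC.shEnt_relabel (fun r => (r.1.1, (r.2.1, (r.1.2, r.2.2))))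
      (fun a b hab => by
        obtain ⟨⟨a1, a2⟩, a3, a4⟩ := a; obtain ⟨⟨b1, b2⟩, b3, b4⟩ := b
        simp only [Prod.mk.injEq] at hab ⊢
        tauto)
      (fun ω => rfl)
  rw [r1, r2, r3]
  ring

lemma RC.cmi_zero {S T U : Type*} [Fintype S] [Fintype T] [Fintype U]
    [MeasurableSpace S] [MeasurableSpace T] [MeasurableSpace U]
    [MeasurableSingletonClass S] [MeasurableSingletonClass T] [MeasurableSingletonClass U]
    {X : Ω → S} {W : Ω → T} {Z : Ω → U}
    (hX : Measurable X) (hW : Measurable W) (hZ : Measurable Z)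
    (hfact : ∀ (s : S) (u : T) (v : U),
      (μ (X ⁻¹' {s} ∩ (W ⁻¹' {u} ∩ Z ⁻¹' {v}))).toReal * (μ (Z ⁻¹' {v})).toReal
        = (μ (X ⁻¹' {s} ∩ Z ⁻¹' {v})).toReal * (μ (W ⁻¹' {u} ∩ Z ⁻¹' {v})).toReal) :
    condMutInf μ X W Z = 0 := by
  classical
  simp only [condMutInf]
  rw [RC.shEnt_triple X W Z, RC.shEnt_pair X Z, RC.shEnt_pair W Z]
  simp only [shEnt]
  set p3 : S → T → U → ℝ :=
    fun s t u => (μ (X ⁻¹' {s} ∩ (W ⁻¹' {t} ∩ Z ⁻¹' {u}))).toReal with hp3def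
  set pXZ : S → U → ℝ := fun s u => (μ (X ⁻¹' {s} ∩ Z ⁻¹' {u})).toReal with hpXZdef
  set pWZ : T → U → ℝ := fun t u => (μ (W ⁻¹' {t} ∩ Z ⁻¹' {u})).toReal with hpWZdef
  set pZ : U → ℝ := fun u => (μ (Z ⁻¹' {u})).toReal with hpZdef
  have hle1 : ∀ s t u, p3 s t u ≤ pXZ s u := fun s t u =>
    RC.pr_le_pr (fun ω hω => ⟨hω.1, hω.2.2⟩)
  have hle2 : ∀ s t u, p3 s t u ≤ pWZ t u := fun s t u =>
    RC.pr_le_pr (fun ω hω => hω.2)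
  have hle3 : ∀ s t u, p3 s t u ≤ pZ u := fun s t u =>
    RC.pr_le_pr (fun ω hω => hω.2.2)
  have hexp : ∑ s : S, ∑ t : T, ∑ u : U, p3 s t u * Real.logb 2 (p3 s t u)
      = (∑ s : S, ∑ t : T, ∑ u : U, p3 s t u * Real.logb 2 (pXZ s u))
        + (∑ s : S, ∑ t : T, ∑ u : U, p3 s t u * Real.logb 2 (pWZ t u))
        - (∑ s : S, ∑ t : T, ∑ u : U, p3 s t u * Real.logb 2 (pZ u)) := by
    rw [← Finset.sum_add_distrib, ← Finset.sum_sub_distrib]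
    refine Finset.sum_congr rfl fun s _ => ?_
    rw [← Finset.sum_add_distrib, ← Finset.sum_sub_distrib]
    refine Finset.sum_congr rfl fun t _ => ?_
    rw [← Finset.sum_add_distrib, ← Finset.sum_sub_distrib]
    refine Finset.sum_congr rfl fun u _ => ?_
    rcases eq_or_ne (p3 s t u) 0 with h0 | h0
    · rw [h0]; ring
    · have hpos : 0 < p3 s t u := lt_of_le_of_ne ENNReal.toReal_nonneg (Ne.symm h0)
      have h1 : pXZ s u ≠ 0 := (lt_of_lt_of_le hpos (hle1 s t u)).ne'
      have h2 : pWZ t u ≠ 0 := (lt_of_lt_of_le hpos (hle2 s t u)).ne'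
      have h3 : pZ u ≠ 0 := (lt_of_lt_of_le hpos (hle3 s t u)).ne'
      have hfe := hfact s t u
      have hlogeq : Real.logb 2 (p3 s t u * pZ u) = Real.logb 2 (pXZ s u * pWZ t u) := by
        rw [hfe]
      rw [Real.logb_mul h0 h3, Real.logb_mul h1 h2] at hlogeq
      have : Real.logb 2 (p3 s t u)
          = Real.logb 2 (pXZ s u) + Real.logb 2 (pWZ t u) - Real.logb 2 (pZ u) := by
        linarith
      rw [this]
      ring
  rw [hexp,
      RC.groupA hX hW hZ (fun s u => Real.logb 2 (pXZ s u)),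
      RC.groupB hX hW hZ (fun t u => Real.logb 2 (pWZ t u)),
      RC.groupC hX hW hZ (fun u => Real.logb 2 (pZ u))]
  ring

end Aux5
section Aux6

lemma RC.const_on_fiber {Ω' S B : Type*} [MeasurableSpace S] [MeasurableSpace B]
    [MeasurableSingletonClass B] {g : Ω' → S} {f : Ω' → B}
    (hf : Measurable[MeasurableSpace.comap g inferInstance] f)
    {ω ω' : Ω'} (h : g ω = g ω') : f ω = f ω' := by
  obtain ⟨Bs, -, hBe⟩ :=
    MeasurableSpace.measurableSet_comap.mp (hf (measurableSet_singleton (f ω')))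
  have h1 : ω' ∈ g ⁻¹' Bs := by
    rw [hBe]; exact rfl
  have h2 : ω ∈ g ⁻¹' Bs := by
    simp only [Set.mem_preimage] at h1 ⊢
    rw [h]; exact h1
  rw [hBe] at h2
  exact h2

lemma RC.exists_factor {Ω' S B : Type*} [Nonempty Ω'] [MeasurableSpace S] [MeasurableSpace B]
    [MeasurableSingletonClass B] {g : Ω' → S} {f : Ω' → B}
    (hf : Measurable[MeasurableSpace.comap g inferInstance] f) :
    ∃ φ : S → B, ∀ ω, f ω = φ (g ω) := by
  classical
  refine ⟨fun s => if h : ∃ ω, g ω = s then f h.choose else f (Classical.arbitrary Ω'),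
    fun ω => ?_⟩
  have hex : ∃ ω', g ω' = g ω := ⟨ω, rfl⟩
  show f ω = if h : ∃ ω', g ω' = g ω then f h.choose else f (Classical.arbitrary Ω')
  rw [dif_pos hex]
  exact (RC.const_on_fiber hf hex.choose_spec).symm

lemma RC.fact_of_condIndep {Ω : Type*} [mΩ : MeasurableSpace Ω] [StandardBorelSpace Ω]
    {μ : Measure Ω} [IsProbabilityMeasure μ]
    {E F G : Type*} [MeasurableSpace E] [MeasurableSpace F] [MeasurableSpace G]
    {Z : Ω → E} {f : Ω → F} {g : Ω → G} (hf : Measurable f) (hg : Measurable g)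
    {hm : MeasurableSpace.comap Z inferInstance ≤ mΩ}
    (h : CondIndepFun (MeasurableSpace.comap Z inferInstance) hm f g μ)
    {SF : Set F} {SG : Set G} (hSF : MeasurableSet SF) (hSG : MeasurableSet SG)
    {v : E} (hv : MeasurableSet ({v} : Set E)) :
    (μ (f ⁻¹' SF ∩ g ⁻¹' SG ∩ Z ⁻¹' {v})).toReal * (μ (Z ⁻¹' {v})).toReal
      = (μ (f ⁻¹' SF ∩ Z ⁻¹' {v})).toReal * (μ (g ⁻¹' SG ∩ Z ⁻¹' {v})).toReal := by
  classical
  set V := Z ⁻¹' {v} with hVdef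
  have hVm' : MeasurableSet[MeasurableSpace.comap Z inferInstance] V := ⟨{v}, hv, rfl⟩
  have hVmeas : MeasurableSet[mΩ] V := hm _ hVm'
  set A := f ⁻¹' SF with hAdef
  set B := g ⁻¹' SG with hBdef
  have hA : MeasurableSet[mΩ] A := hf hSF
  have hB : MeasurableSet[mΩ] B := hg hSG
  by_cases hμV : μ V = 0
  · have h1 : μ (A ∩ B ∩ V) = 0 := measure_mono_null Set.inter_subset_right hμV
    have h2 : μ (A ∩ V) = 0 := measure_mono_null Set.inter_subset_right hμV
    rw [h1, h2]
    simp
  · obtain ⟨ω₀, hω₀⟩ : V.Nonempty := nonempty_of_measure_ne_zero hμV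
    have hind := (condIndepFun_iff_condExp_inter_preimage_eq_mul hf hg).mp h SF SG hSF hSG
    have hint : ∀ C : Set Ω, MeasurableSet[mΩ] C →
        ∫ ω in V, (μ⟦C | MeasurableSpace.comap Z inferInstance⟧) ω ∂μ
          = (μ (C ∩ V)).toReal := by
      intro C hC
      rw [setIntegral_condExp hm ((integrable_const (1:ℝ)).indicator hC) hVm']
      rw [integral_indicator hC, setIntegral_const, measureReal_def, Measure.restrict_apply hC,
        smul_eq_mul, mul_one]
    have hconst : ∀ C : Set Ω, ∀ ω ∈ V,
        (μ⟦C | MeasurableSpace.comap Z inferInstance⟧) ω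
          = (μ⟦C | MeasurableSpace.comap Z inferInstance⟧) ω₀ := by
      intro C ω hω
      refine RC.const_on_fiber (g := Z) stronglyMeasurable_condExp.measurable ?_
      have h1 : Z ω = v := hω
      have h2 : Z ω₀ = v := hω₀
      rw [h1, h2]
    have hconstint : ∀ C : Set Ω,
        ∫ ω in V, (μ⟦C | MeasurableSpace.comap Z inferInstance⟧) ω ∂μ
          = (μ⟦C | MeasurableSpace.comap Z inferInstance⟧) ω₀ * (μ V).toReal := by
      intro C
      rw [setIntegral_congr_fun hVmeas (fun ω hω => hconst C ω hω), setIntegral_const,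
        smul_eq_mul, mul_comm, measureReal_def]
    have hcA : (μ⟦A | MeasurableSpace.comap Z inferInstance⟧) ω₀ * (μ V).toReal
        = (μ (A ∩ V)).toReal := by
      rw [← hconstint A, hint A hA]
    have hcB : (μ⟦B | MeasurableSpace.comap Z inferInstance⟧) ω₀ * (μ V).toReal
        = (μ (B ∩ V)).toReal := by
      rw [← hconstint B, hint B hB]
    have hAB : (μ (A ∩ B ∩ V)).toReal
        = (μ⟦A | MeasurableSpace.comap Z inferInstance⟧) ω₀
          * (μ⟦B | MeasurableSpace.comap Z inferInstance⟧) ω₀ * (μ V).toReal := by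
      rw [← hint (A ∩ B) (hA.inter hB)]
      rw [setIntegral_congr_ae hVmeas (hind.mono fun ω hω _ => hω)]
      rw [setIntegral_congr_fun hVmeas
        (fun ω hω => by rw [hconst A ω hω, hconst B ω hω])]
      rw [setIntegral_const, smul_eq_mul, mul_comm, measureReal_def]
    rw [hAB, ← hcA, ← hcB]
    ring

end Aux6

/-- Rate converse for causal source coding with decoder side information: if each packet `a_t`
is a deterministic causal function of `x^t` (i.e. measurable w.r.t. the σ-algebra generated by
`x^t`), and for every `t` the pair `(x^t, a^{t-1})` is conditionally independent of `w_t` given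
`(a^t, w^{t-1})`, then the total rate `Σ_t log₂ |A_t|` is at least the directed information
`I(x^T → w^T)`. -/
theorem rate_converse_causal_coding_decoder_SI
    {Ω : Type*} [MeasurableSpace Ω] [StandardBorelSpace Ω]
    (μ : Measure Ω) [IsProbabilityMeasure μ]
    (T : ℕ) {α γ : ℕ → Type*} {A : ℕ → Type*}
    [∀ t, Fintype (α t)] [∀ t, Fintype (γ t)] [∀ t, Fintype (A t)]
    [∀ t, MeasurableSpace (α t)] [∀ t, MeasurableSpace (γ t)] [∀ t, MeasurableSpace (A t)]
    [∀ t, MeasurableSingletonClass (α t)] [∀ t, MeasurableSingletonClass (γ t)]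
    [∀ t, MeasurableSingletonClass (A t)]
    (x : (t : ℕ) → Ω → α t) (w : (t : ℕ) → Ω → γ t) (a : (t : ℕ) → Ω → A t)
    (hx : ∀ t, Measurable (x t)) (hw : ∀ t, Measurable (w t)) (ha : ∀ t, Measurable (a t))
    (h_enc : ∀ t, Measurable[MeasurableSpace.comap (hist x (t + 1)) inferInstance] (a t))
    (hMarkov : ∀ t < T,
      CondIndepFun
        (MeasurableSpace.comap (fun ω => (hist a (t + 1) ω, hist w t ω)) inferInstance)
        (((hist_measurable a ha (t + 1)).prodMk (hist_measurable w hw t)).comap_le)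
        (fun ω => (hist x (t + 1) ω, hist a t ω)) (w t) μ) :
    ∑ t ∈ range T, Real.logb 2 (Fintype.card (A t))
      ≥ ∑ t ∈ range T, condMutInf μ (hist x (t + 1)) (w t) (hist w t) := by
  classical
  have hΩ : Nonempty Ω := by
    rcases isEmpty_or_nonempty Ω with hE | hNE
    · exfalso
      have h1 : μ Set.univ = 1 := measure_univ
      rw [Set.univ_eq_empty_iff.mpr hE, measure_empty] at h1
      exact zero_ne_one h1
    · exact hNE
  rw [ge_iff_le]
  have hXm : ∀ t, Measurable (hist x t) := fun t => hist_measurable x hx t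
  have hAm : ∀ t, Measurable (hist a t) := fun t => hist_measurable a ha t
  have hWm : ∀ t, Measurable (hist w t) := fun t => hist_measurable w hw t
  -- snoc identity for histories of w
  have hsnocw : ∀ (t : ℕ) (ω : Ω), hist w (t+1) ω
      = Fin.snoc (α := fun i : Fin (t+1) => γ ↑i) (hist w t ω) (w t ω) := by
    intro t ω
    funext i
    refine Fin.lastCases ?_ (fun j => ?_) i
    · rw [Fin.snoc_last]
      rfl
    · rw [Fin.snoc_castSucc]
      rfl
  have hsnocinj : ∀ t : ℕ, Function.Injective
      (fun p : γ t × ((i : Fin t) → γ ↑i) =>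
        Fin.snoc (α := fun i : Fin (t+1) => γ ↑i) p.2 p.1) := by
    intro t p q hpq
    have h1 : p.1 = q.1 := by
      have h := congrFun hpq (Fin.last t)
      simpa [Fin.snoc_last] using h
    have h2 : p.2 = q.2 := by
      funext j
      have h := congrFun hpq (Fin.castSucc j)
      simpa [Fin.snoc_castSucc] using h
    exact Prod.ext h1 h2
  -- the per-step bound
  have key : ∀ t, t < T →
      condMutInf μ (hist x (t+1)) (w t) (hist w t)
        ≤ mutInf μ (hist a T) (hist w (t+1)) - mutInf μ (hist a T) (hist w t) := by
    intro t ht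
    have hXt := hXm (t+1)
    have hAt := hAm (t+1)
    have hat := hAm t
    have hWt := hWm t
    have hwt := hw t
    have hB := hAm T
    -- Markov term vanishes
    have hzero : condMutInf μ (hist x (t+1)) (w t)
        (fun ω => (hist a (t+1) ω, hist w t ω)) = 0 := by
      refine RC.cmi_zero hXt hwt (hAt.prodMk hWt) ?_
      intro s u v
      have hfact := RC.fact_of_condIndep (hXt.prodMk hat) hwt (hMarkov t ht)
        (SF := {s} ×ˢ (Set.univ : Set ((i : Fin t) → A ↑i)))
        ((measurableSet_singleton s).prod MeasurableSet.univ)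
        (measurableSet_singleton u) (measurableSet_singleton v)
      have hfpre : (fun ω => (hist x (t+1) ω, hist a t ω)) ⁻¹'
          ({s} ×ˢ (Set.univ : Set ((i : Fin t) → A ↑i))) = hist x (t+1) ⁻¹' {s} := by
        ext ω; simp [eq_comm]
      rw [hfpre] at hfact
      rw [← Set.inter_assoc]
      exact hfact
    have hstep12 : condMutInf μ (hist x (t+1)) (w t) (hist w t)
        ≤ condMutInf μ (hist a (t+1)) (w t) (hist w t) := by
      have h1 : condMutInf μ (hist x (t+1)) (w t) (hist w t)
          ≤ condMutInf μ (fun ω => (hist x (t+1) ω, hist a (t+1) ω)) (w t) (hist w t) :=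
        RC.cmi_mono_left hXt hAt hwt hWt
      have h2 : condMutInf μ (fun ω => (hist x (t+1) ω, hist a (t+1) ω)) (w t) (hist w t)
          = condMutInf μ (hist a (t+1)) (w t) (hist w t)
            + condMutInf μ (hist x (t+1)) (w t)
                (fun ω => (hist a (t+1) ω, hist w t ω)) := RC.cmi_chain
      rw [h2, hzero, add_zero] at h1
      exact h1
    have hstep4 : condMutInf μ (hist a (t+1)) (w t) (hist w t)
        ≤ condMutInf μ (hist a T) (w t) (hist w t) := by
      have hmono : condMutInf μ (hist a (t+1)) (w t) (hist w t)
          ≤ condMutInf μ (fun ω => (hist a (t+1) ω, hist a T ω)) (w t) (hist w t) :=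
        RC.cmi_mono_left hAt hB hwt hWt
      have hrel : condMutInf μ (fun ω => (hist a (t+1) ω, hist a T ω)) (w t) (hist w t)
          = condMutInf μ (hist a T) (w t) (hist w t) := by
        refine RC.cmi_relabel_left
          (f := fun b : (i : Fin T) → A ↑i =>
            ((fun i : Fin (t+1) => b (Fin.castLE (by omega) i)), b)) ?_ ?_
        · intro b b' hb
          exact congrArg Prod.snd hb
        · intro ω; rfl
      linarith
    have hstep5 : condMutInf μ (hist a T) (w t) (hist w t)
        = mutInf μ (hist a T) (hist w (t+1)) - mutInf μ (hist a T) (hist w t) := by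
      simp only [condMutInf, mutInf]
      have r1 : shEnt μ (hist w (t+1)) = shEnt μ (fun ω => (w t ω, hist w t ω)) :=
        RC.shEnt_relabel
          (f := fun p : γ t × ((i : Fin t) → γ ↑i) =>
            Fin.snoc (α := fun i : Fin (t+1) => γ ↑i) p.2 p.1)
          (hsnocinj t) (fun ω => hsnocw t ω)
      have r2 : shEnt μ (fun ω => (hist a T ω, hist w (t+1) ω))
          = shEnt μ (fun ω => (hist a T ω, w t ω, hist w t ω)) :=
        RC.shEnt_relabel
          (f := fun p : ((i : Fin T) → A ↑i) × (γ t × ((i : Fin t) → γ ↑i)) =>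
            (p.1, Fin.snoc (α := fun i : Fin (t+1) => γ ↑i) p.2.2 p.2.1))
          (fun pq pq' hh => by
            obtain ⟨p1, p2⟩ := pq; obtain ⟨q1, q2⟩ := pq'
            simp only [Prod.mk.injEq] at hh ⊢
            exact ⟨hh.1, hsnocinj t hh.2⟩)
          (fun ω => by
            simp only
            rw [hsnocw t ω])
      rw [r1, r2]
      ring
    linarith
  have hsum : ∑ t ∈ range T, condMutInf μ (hist x (t+1)) (w t) (hist w t)
      ≤ ∑ t ∈ range T,
          (mutInf μ (hist a T) (hist w (t+1)) - mutInf μ (hist a T) (hist w t)) :=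
    Finset.sum_le_sum fun t ht => key t (Finset.mem_range.mp ht)
  rw [Finset.sum_range_sub (fun t => mutInf μ (hist a T) (hist w t))] at hsum
  have hzero0 : mutInf μ (hist a T) (hist w 0) = 0 := by
    simp only [mutInf]
    have h1 : shEnt μ (hist w 0) = 0 := RC.shEnt_of_unique _
    have h2 : shEnt μ (fun ω => (hist a T ω, hist w 0 ω)) = shEnt μ (hist a T) :=
      RC.shEnt_relabel
        (f := fun b : (i : Fin T) → A ↑i => (b, (default : (i : Fin 0) → γ ↑i)))
        (fun b b' hb => congrArg Prod.fst hb)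
        (fun ω => by rw [Subsingleton.elim (hist w 0 ω) (default : (i : Fin 0) → γ ↑i)])
    rw [h1, h2]
    ring
  have hNA : ∀ i : Fin T, Nonempty (A ↑i) := fun i => ⟨a ↑i (Classical.arbitrary Ω)⟩
  have hm1 : mutInf μ (hist a T) (hist w T) ≤ shEnt μ (hist a T) := by
    simp only [mutInf]
    have h := RC.shEnt_right_le_pair (μ := μ) (hAm T) (hWm T)
    linarith
  have hm2 : shEnt μ (hist a T) ≤ Real.logb 2 (Fintype.card ((i : Fin T) → A ↑i)) :=
    RC.shEnt_le_logb_card (hAm T)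
  have hm3 : Real.logb 2 (Fintype.card ((i : Fin T) → A ↑i))
      = ∑ t ∈ range T, Real.logb 2 (Fintype.card (A t)) := by
    rw [← Fin.sum_univ_eq_sum_range (fun t => Real.logb 2 (Fintype.card (A t)))]
    simp only [Real.logb]
    rw [Fintype.card_pi, Nat.cast_prod,
      Real.log_prod (fun i _ => by
        haveI := hNA i
        exact_mod_cast (Fintype.card_ne_zero : Fintype.card (A ↑i) ≠ 0)),
      Finset.sum_div]
  linarith [hsum, hzero0, hm1, hm2, hm3]
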